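/- Let X be a pure k-dimensional complex, F ∈ X_{k−2}, and u, v vertices of lk(F,X). Writing F_u = F∪{u} and F_v = F∪{v}, the restricted normalized Laplacian satisfies (ρ_F Δ^up_{k−1}(X) ρ_F)_{F_u, F_v} = [F_u : F]·[F_v : F]·(Δ(lk F))_{u,v}, where Δ(lk F) is the normalized graph Laplacian of the link graph. Consequently ⟨ρ_F Δ^up_{k−1}(X) ρ_F f, f⟩ = ⟨Δ(lk F) f_F, f_F⟩ for every f ∈ C^{k−1}(X;R), where f_F(u) := [F∪{u} : F] f(F∪{u}). -/
import Mathlib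


/-- Signed incidence number `[F : G]`. -/
def incSign {n : ℕ} (F G : Finset (Fin n)) : ℤ :=
  if G ⊆ F ∧ F.card = G.card + 1 then
    ∑ v ∈ F \ G, (-1 : ℤ) ^ (G.filter (fun x => x < v)).card
  else 0

/-- The `(k−1)`-faces of a pure `k`-dimensional complex with set `K` of `k`-faces. -/
abbrev Faces (n k : ℕ) (K : Finset (Finset (Fin n))) :=
  {G : Finset (Fin n) // G.card = k ∧ ∃ H ∈ K, G ⊆ H}

/-- The vertices of the link of a `(k−2)`-face `F`. -/
abbrev LinkVerts (n k : ℕ) (K : Finset (Finset (Fin n))) (F : Finset (Fin n)) :=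
  {u : Fin n // u ∉ F ∧ ∃ H ∈ K, insert u F ⊆ H}

lemma incSign_insert {n : ℕ} (F : Finset (Fin n)) (u : Fin n) (hu : u ∉ F) :
    incSign (insert u F) F = (-1 : ℤ) ^ (F.filter (fun x => x < u)).card := by
  have hsd : insert u F \ F = {u} := by
    ext x
    simp only [Finset.mem_sdiff, Finset.mem_insert, Finset.mem_singleton]
    constructor
    · rintro ⟨h1 | h1, h2⟩ <;> tauto
    · rintro rfl; exact ⟨Or.inl rfl, hu⟩
  rw [incSign, if_pos ⟨Finset.subset_insert _ _, Finset.card_insert_of_notMem hu⟩, hsd,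
    Finset.sum_singleton]

lemma incSign_insert_sq {n : ℕ} (F : Finset (Fin n)) (u : Fin n) (hu : u ∉ F) :
    incSign (insert u F) F * incSign (insert u F) F = 1 := by
  rw [incSign_insert F u hu, ← mul_pow]; norm_num

/-- Entrywise identification of the restricted normalized Laplacian with the normalized
Laplacian of the link of a `(k−2)`-face `F`:
`(ρ_F Δ^up_{k−1} ρ_F)_{F∪{u}, F∪{v}} = [F∪{u}:F]·[F∪{v}:F]·Δ(lk F)_{u,v}`, and the
corresponding equality of (degree-weighted) quadratic forms
`⟨ρ_F Δ ρ_F f, f⟩ = ⟨Δ(lk F) f_F, f_F⟩` with `f_F(u) = [F∪{u}:F] f(F∪{u})`. -/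
theorem stmt10 (n k : ℕ) (hk : 2 ≤ k)
    (K : Finset (Finset (Fin n))) (hK : ∀ H ∈ K, H.card = k + 1)
    (deg : Finset (Fin n) → ℕ) (hdeg : ∀ G, deg G = (K.filter (fun H => G ⊆ H)).card)
    (A Δ : Matrix (Faces n k K) (Faces n k K) ℝ)
    (hA : ∀ G G', A G G' = if G.1 ≠ G'.1 ∧ (G.1 ∩ G'.1).card = k - 1 ∧ G.1 ∪ G'.1 ∈ K
        then ((incSign G.1 (G.1 ∩ G'.1) * incSign G'.1 (G.1 ∩ G'.1) : ℤ) : ℝ) else 0)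
    (hΔ : Δ = 1 - Matrix.diagonal (fun G => ((deg G.1 : ℝ))⁻¹) * A)
    (F : Finset (Fin n)) (hF : F.card = k - 1)
    (ρF : Matrix (Faces n k K) (Faces n k K) ℝ)
    (hρ : ρF = Matrix.diagonal (fun G => if F ⊆ G.1 then (1 : ℝ) else 0))
    (ι : LinkVerts n k K F → Faces n k K) (hι : ∀ u, (ι u).1 = insert u.1 F)
    (Alk Δlk : Matrix (LinkVerts n k K F) (LinkVerts n k K F) ℝ)
    (hAlk : ∀ u v, Alk u v =
        if u ≠ v ∧ insert u.1 (insert v.1 F) ∈ K then (1 : ℝ) else 0)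
    (hΔlk : Δlk = 1 - Matrix.diagonal (fun u => ((deg (insert u.1 F) : ℝ))⁻¹) * Alk) :
    (∀ u v, (ρF * Δ * ρF) (ι u) (ι v)
        = ((incSign (insert u.1 F) F : ℝ) * (incSign (insert v.1 F) F : ℝ)) * Δlk u v) ∧
    (∀ f : Faces n k K → ℝ,
      ∑ G, (deg G.1 : ℝ) * ((ρF * Δ * ρF).mulVec f) G * f G
        = ∑ u, (deg (insert u.1 F) : ℝ)
            * (Δlk.mulVec (fun w => (incSign (insert w.1 F) F : ℝ) * f (ι w))) u
            * ((incSign (insert u.1 F) F : ℝ) * f (ι u))) := by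
  have hsub : ∀ u : LinkVerts n k K F, F ⊆ (ι u).1 := fun u => by
    rw [hι]; exact Finset.subset_insert _ _
  have hinj : Function.Injective ι := by
    intro a b hab
    have h1 : a.1 ∈ insert b.1 F := by
      rw [← hι b, ← hab, hι a]; exact Finset.mem_insert_self _ _
    rcases Finset.mem_insert.mp h1 with h | h
    · exact Subtype.ext h
    · exact absurd h a.2.1
  have hval : ∀ u v : LinkVerts n k K F,
      (ρF * Δ * ρF) (ι u) (ι v) = Δ (ι u) (ι v) := by
    intro u v
    rw [hρ]
    simp only [Matrix.mul_diagonal, Matrix.diagonal_mul, if_pos (hsub u), if_pos (hsub v),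
      one_mul, mul_one]
  have hinter : ∀ u v : LinkVerts n k K F, u ≠ v →
      insert u.1 F ∩ insert v.1 F = F := by
    intro u v huv
    have hne : u.1 ≠ v.1 := fun h => huv (Subtype.ext h)
    ext x
    simp only [Finset.mem_inter, Finset.mem_insert]
    constructor
    · rintro ⟨h1 | h1, h2 | h2⟩
      · exact absurd (h1.symm.trans h2) hne
      · exact h2
      · exact h1
      · exact h1
    · intro hx; exact ⟨Or.inr hx, Or.inr hx⟩
  have hunion : ∀ u v : LinkVerts n k K F,
      insert u.1 F ∪ insert v.1 F = insert u.1 (insert v.1 F) := by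
    intro u v
    rw [Finset.insert_union, Finset.union_insert, Finset.union_self]
  have part1 : ∀ u v, (ρF * Δ * ρF) (ι u) (ι v)
      = ((incSign (insert u.1 F) F : ℝ) * (incSign (insert v.1 F) F : ℝ)) * Δlk u v := by
    intro u v
    rw [hval u v, hΔ, hΔlk]
    simp only [Matrix.sub_apply, Matrix.diagonal_mul, hA, hAlk]
    by_cases huv : u = v
    · subst huv
      rw [Matrix.one_apply_eq, Matrix.one_apply_eq, if_neg (by simp), if_neg (by simp), hι u]
      simp only [mul_zero, sub_zero, mul_one]
      exact_mod_cast (incSign_insert_sq F u.1 u.2.1).symm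
    · have h1 : ι u ≠ ι v := fun h => huv (hinj h)
      have h2 : insert u.1 F ≠ insert v.1 F := by
        intro h; apply huv; apply hinj; exact Subtype.ext (by rw [hι u, hι v]; exact h)
      rw [Matrix.one_apply_ne h1, Matrix.one_apply_ne huv, hι u, hι v, hinter u v huv,
        hunion u v]
      by_cases hc : insert u.1 (insert v.1 F) ∈ K
      · rw [if_pos ⟨h2, hF, hc⟩, if_pos ⟨huv, hc⟩]; push_cast; ring
      · rw [if_neg (fun h => hc h.2.2), if_neg (fun h => hc h.2)]; ring
  refine ⟨part1, ?_⟩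
  have hzero : ∀ G G' : Faces n k K, (¬ F ⊆ G.1 ∨ ¬ F ⊆ G'.1) → (ρF * Δ * ρF) G G' = 0 := by
    intro G G' h
    rw [hρ]
    simp only [Matrix.mul_diagonal, Matrix.diagonal_mul]
    rcases h with h | h <;> simp [h]
  have hsurj : ∀ G : Faces n k K, F ⊆ G.1 → ∃ u : LinkVerts n k K F, ι u = G := by
    intro G hFG
    have hcard : (G.1 \ F).card = 1 := by
      rw [Finset.card_sdiff_of_subset hFG, hF, G.2.1]; omega
    obtain ⟨u, hu⟩ := Finset.card_eq_one.mp hcard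
    have hu1 : u ∈ G.1 \ F := hu ▸ Finset.mem_singleton_self u
    have huF : u ∉ F := (Finset.mem_sdiff.mp hu1).2
    have hins : insert u F = G.1 := by
      rw [Finset.insert_eq, ← hu, Finset.sdiff_union_of_subset hFG]
    obtain ⟨H, hH, hGH⟩ := G.2.2
    refine ⟨⟨u, huF, H, hH, by rw [hins]; exact hGH⟩, Subtype.ext ?_⟩
    rw [hι]; exact hins
  have hreindex : ∀ t : Faces n k K → ℝ, (∀ G, ¬ F ⊆ G.1 → t G = 0) →
      ∑ G, t G = ∑ u, t (ι u) := by
    intro t ht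
    rw [← Finset.sum_subset (Finset.filter_subset (fun G => F ⊆ G.1) Finset.univ)
        (fun G _ hG => ht G (by simpa using hG))]
    exact (Finset.sum_bij (fun u _ => ι u)
        (fun u _ => Finset.mem_filter.mpr ⟨Finset.mem_univ _, hsub u⟩)
        (fun a _ b _ h => hinj h)
        (fun G hG => by
          obtain ⟨u, hu⟩ := hsurj G (Finset.mem_filter.mp hG).2
          exact ⟨u, Finset.mem_univ _, hu⟩)
        (fun u _ => rfl)).symm
  intro f
  have hmv : ∀ u : LinkVerts n k K F,
      ((ρF * Δ * ρF).mulVec f) (ι u)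
        = (incSign (insert u.1 F) F : ℝ) *
          (Δlk.mulVec (fun w => (incSign (insert w.1 F) F : ℝ) * f (ι w))) u := by
    intro u
    have hv : ∑ G', (ρF * Δ * ρF) (ι u) G' * f G'
        = ∑ v, (ρF * Δ * ρF) (ι u) (ι v) * f (ι v) :=
      hreindex (fun G' => (ρF * Δ * ρF) (ι u) G' * f G')
        (fun G' hG' => by simp only [hzero _ _ (Or.inr hG'), zero_mul])
    simp only [Matrix.mulVec, dotProduct]
    rw [hv, Finset.mul_sum]
    refine Finset.sum_congr rfl fun v _ => ?_
    rw [part1 u v]; ring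
  rw [hreindex (fun G => (deg G.1 : ℝ) * ((ρF * Δ * ρF).mulVec f) G * f G)
      (fun G hG => by
        have : ((ρF * Δ * ρF).mulVec f) G = 0 := by
          simp only [Matrix.mulVec, dotProduct]
          exact Finset.sum_eq_zero fun G' _ => by simp only [hzero _ _ (Or.inl hG), zero_mul]
        simp only [this, mul_zero, zero_mul])]
  refine Finset.sum_congr rfl fun u _ => ?_
  simp only [hι u, hmv u]; ring
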